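/- Let d ≥ 1 be fixed, p prime with p > 4d, N = p^d, and let P be the standard transition matrix on the torus ℤ_p^d. Then every entry of the infinite-time Cesaro matrix Π of the quantum walk e^{−iPt} is bounded below by Ω(1/N): there is a constant c(d) > 0 (depending only on d) with Π(y,x) ≥ c(d)/N for all x, y. -/

import Mathlib

open Finset

open Polynomial

noncomputable def qwChi (p : ℕ) [NeZero p] (w : ZMod p) : ℂ :=
  Complex.exp (2 * Real.pi * Complex.I * ((w.val : ℝ)) / p)

lemma qwChi_int (p : ℕ) [NeZero p] (w : ZMod p) (W : ℤ) (hW : (W : ZMod p) = w) :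
    qwChi p w = Complex.exp (2 * Real.pi * Complex.I * (W : ℂ) / p) := by
  have hpd : (p : ℤ) ∣ ((w.val : ℤ) - W) := by
    have h1 : ((w.val : ℤ) : ZMod p) = w := by simp [ZMod.natCast_val, ZMod.cast_id]
    have : (((w.val : ℤ) - W : ℤ) : ZMod p) = 0 := by push_cast [h1, hW]; ring
    exact (ZMod.intCast_zmod_eq_zero_iff_dvd _ p).mp this
  obtain ⟨t, ht⟩ := hpd
  have hval : ((w.val : ℂ)) = (W : ℂ) + (p : ℂ) * t := by
    have : ((w.val : ℤ)) = W + p * t := by linarith [ht]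
    exact_mod_cast congrArg (fun n : ℤ => (n : ℂ)) this
  have hp0 : (p : ℂ) ≠ 0 := Nat.cast_ne_zero.mpr (NeZero.ne p)
  unfold qwChi
  rw [show ((w.val : ℝ) : ℂ) = (w.val : ℂ) by push_cast; ring, hval]
  rw [show 2 * Real.pi * Complex.I * ((W : ℂ) + (p : ℂ) * t) / p
      = 2 * Real.pi * Complex.I * (W : ℂ) / p + t * (2 * Real.pi * Complex.I) by
    field_simp]
  rw [Complex.exp_add, Complex.exp_int_mul_two_pi_mul_I, mul_one]

lemma qwChi_add_neg (p : ℕ) [NeZero p] (w : ZMod p) :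
    qwChi p w + qwChi p (-w) = 2 * (Real.cos (2 * Real.pi * (w.val : ℝ) / p) : ℂ) := by
  have h1 : qwChi p w = Complex.exp ((2 * Real.pi * (w.val : ℝ) / p : ℝ) * Complex.I) := by
    unfold qwChi; push_cast; ring_nf
  have h2 : qwChi p (-w) = Complex.exp (-((2 * Real.pi * (w.val : ℝ) / p : ℝ) * Complex.I)) := by
    rw [qwChi_int p (-w) (-(w.val : ℤ)) (by push_cast [ZMod.natCast_val, ZMod.cast_id]; ring)]
    push_cast; ring_nf
  rw [h1, h2, Complex.ofReal_cos, Complex.cos]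
  rw [show -(((2 * Real.pi * (w.val:ℝ) / p : ℝ) : ℂ) * Complex.I)
      = ((2 * Real.pi * (w.val:ℝ) / p : ℝ) : ℂ) * -Complex.I by ring]
  ring

lemma qw_class_lemma (d p : ℕ) [NeZero p] (hp : p.Prime)
    (k l : Fin d → ZMod p)
    (h : ∑ j, Real.cos (2 * Real.pi * (((k j).val : ℝ)) / p)
       = ∑ j, Real.cos (2 * Real.pi * (((l j).val : ℝ)) / p)) :
    ∀ i, ∃ m, l i = k m ∨ l i = - k m := by
  set ζ : ℂ := Complex.exp (2 * Real.pi * Complex.I / p) with hζ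
  have hprim : IsPrimitiveRoot ζ p := by
    exact Complex.isPrimitiveRoot_exp p (NeZero.ne p)
  have hchi : ∀ w : ZMod p, qwChi p w = ζ ^ w.val := by
    intro w
    rw [hζ, ← Complex.exp_nat_mul]
    unfold qwChi
    congr 1
    push_cast; field_simp
  -- the polynomial
  set q : Polynomial ℚ := ∑ j : Fin d,
      ((X ^ ((k j).val) + X ^ ((-(k j)).val)) - (X ^ ((l j).val) + X ^ ((-(l j)).val))) with hq
  have haeval : Polynomial.aeval ζ q = 0 := by
    rw [hq]
    rw [map_sum]
    have hterm : ∀ j : Fin d, Polynomial.aeval ζ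
        (((X : Polynomial ℚ) ^ ((k j).val) + X ^ ((-(k j)).val)) - (X ^ ((l j).val) + X ^ ((-(l j)).val)))
        = (2 * (Real.cos (2 * Real.pi * (((k j).val : ℝ)) / p) : ℂ))
          - (2 * (Real.cos (2 * Real.pi * (((l j).val : ℝ)) / p) : ℂ)) := by
      intro j
      rw [map_sub, map_add, map_add]
      simp only [map_pow, Polynomial.aeval_X]
      rw [← hchi (k j), ← hchi (-(k j)), ← hchi (l j), ← hchi (-(l j))]
      rw [qwChi_add_neg, qwChi_add_neg]
    rw [Finset.sum_congr rfl (fun j _ => hterm j)]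
    rw [Finset.sum_sub_distrib, ← Finset.mul_sum, ← Finset.mul_sum]
    rw [← Complex.ofReal_sum, ← Complex.ofReal_sum, h]
    ring
  have hq0 : q = 0 := by
    by_contra hne
    have hΦdvd : cyclotomic p ℚ ∣ q := by
      rw [cyclotomic_eq_minpoly_rat hprim hp.pos]
      exact minpoly.dvd ℚ ζ haeval
    obtain ⟨r, hr⟩ := hΦdvd
    have hΦne : cyclotomic p ℚ ≠ 0 := cyclotomic_ne_zero p ℚ
    have hrne : r ≠ 0 := by rintro rfl; rw [mul_zero] at hr; exact hne hr
    have hdegΦ : (cyclotomic p ℚ).natDegree = p - 1 := by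
      rw [natDegree_cyclotomic, Nat.totient_prime hp]
    have hdegq : q.natDegree ≤ p - 1 := by
      rw [hq]
      apply Polynomial.natDegree_sum_le_of_forall_le
      intro j _
      have hb : ∀ a : ZMod p, (X ^ a.val : Polynomial ℚ).natDegree ≤ p - 1 := by
        intro a
        rw [natDegree_X_pow]
        exact Nat.le_sub_one_of_lt (ZMod.val_lt a)
      refine le_trans (natDegree_sub_le _ _) (max_le ?_ ?_) <;>
        refine le_trans (natDegree_add_le _ _) (max_le (hb _) (hb _))
    have hdegmul : q.natDegree = (cyclotomic p ℚ).natDegree + r.natDegree := by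
      rw [hr, natDegree_mul hΦne hrne]
    have hrdeg : r.natDegree = 0 := by omega
    obtain ⟨t, rfl⟩ := Polynomial.natDegree_eq_zero.mp hrdeg
    have heval1 : q.eval 1 = 0 := by
      rw [hq, Polynomial.eval_finset_sum]
      simp
    rw [hr, Polynomial.eval_mul] at heval1
    have : (Polynomial.eval 1 (cyclotomic p ℚ) : ℚ) = p := by
      haveI := Fact.mk hp; exact_mod_cast Polynomial.eval_one_cyclotomic_prime
    rw [this, Polynomial.eval_C] at heval1
    have hpq : (p : ℚ) ≠ 0 := Nat.cast_ne_zero.mpr (NeZero.ne p)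
    have ht0 : t = 0 := by
      rcases mul_eq_zero.mp heval1 with h' | h'
      · exact absurd h' hpq
      · exact h'
    rw [ht0, map_zero, mul_zero] at hr
    exact hne hr
  intro i
  by_contra hcon
  push_neg at hcon
  -- coefficient at e := (l i).val
  set e := (l i).val with he
  have hcoeff : q.coeff e = 0 := by rw [hq0]; simp
  rw [hq, Polynomial.finset_sum_coeff] at hcoeff
  have hterm : ∀ j : Fin d,
      (((X : Polynomial ℚ) ^ ((k j).val) + X ^ ((-(k j)).val))
        - (X ^ ((l j).val) + X ^ ((-(l j)).val))).coeff e
      = ((if e = (k j).val then (1:ℚ) else 0) + (if e = (-(k j)).val then 1 else 0))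
        - ((if e = (l j).val then (1:ℚ) else 0) + (if e = (-(l j)).val then 1 else 0)) := by
    intro j
    simp [Polynomial.coeff_sub, Polynomial.coeff_add, Polynomial.coeff_X_pow]
  rw [Finset.sum_congr rfl (fun j _ => hterm j)] at hcoeff
  have hvalinj : Function.Injective (ZMod.val (n := p)) := ZMod.val_injective p
  have hjle : ∀ j : Fin d,
      ((if e = (k j).val then (1:ℚ) else 0) + (if e = (-(k j)).val then 1 else 0))
        - ((if e = (l j).val then (1:ℚ) else 0) + (if e = (-(l j)).val then 1 else 0)) ≤ 0 := by
    intro j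
    have h1 : (if e = (k j).val then (1:ℚ) else 0) = 0 := by
      rw [if_neg]; intro hh
      exact (hcon j).1 (hvalinj (he ▸ hh))
    have h2 : (if e = (-(k j)).val then (1:ℚ) else 0) = 0 := by
      rw [if_neg]; intro hh
      exact (hcon j).2 (hvalinj (he ▸ hh))
    rw [h1, h2]
    have : (0:ℚ) ≤ (if e = (l j).val then (1:ℚ) else 0) + (if e = (-(l j)).val then 1 else 0) := by
      positivity
    linarith
  have hstrict :
      ((if e = (k i).val then (1:ℚ) else 0) + (if e = (-(k i)).val then 1 else 0))
        - ((if e = (l i).val then (1:ℚ) else 0) + (if e = (-(l i)).val then 1 else 0)) < 0 := by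
    have h1 : (if e = (k i).val then (1:ℚ) else 0) = 0 := by
      rw [if_neg]; intro hh
      exact (hcon i).1 (hvalinj (he ▸ hh))
    have h2 : (if e = (-(k i)).val then (1:ℚ) else 0) = 0 := by
      rw [if_neg]; intro hh
      exact (hcon i).2 (hvalinj (he ▸ hh))
    have h3 : (if e = (l i).val then (1:ℚ) else 0) = 1 := if_pos he
    have h4 : (0:ℚ) ≤ (if e = (-(l i)).val then (1:ℚ) else 0) := by positivity
    rw [h1, h2, h3]
    linarith
  have : (∑ j : Fin d,
      (((if e = (k j).val then (1:ℚ) else 0) + (if e = (-(k j)).val then 1 else 0))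
        - ((if e = (l j).val then (1:ℚ) else 0) + (if e = (-(l j)).val then 1 else 0))))
      < ∑ _j : Fin d, (0:ℚ) := by
    apply Finset.sum_lt_sum (fun j _ => hjle j)
    exact ⟨i, Finset.mem_univ i, hstrict⟩
  rw [hcoeff] at this
  simp at this

lemma qw_bohr (d p : ℕ) [NeZero p] (hp : p.Prime) (hd : 0 < d) (z : Fin d → ZMod p) :
    ∃ T : Finset (ZMod p),
      ((p : ℝ) ≤ (((8 * d) ^ d : ℕ) : ℝ) * T.card) ∧
      ∀ m ∈ T, ∀ j : Fin d, ∃ W : ℤ, (W : ZMod p) = m * z j ∧ W.natAbs * (8 * d) < p := by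
  set M := 8 * d with hM
  have hMpos : 0 < M := by omega
  have key : ∀ A B : ℕ, A / p = B / p → ((A : ℤ) - B).natAbs < p := by
    intro A B h
    have h1 := Nat.div_add_mod A p
    have h2 := Nat.div_add_mod B p
    have h3 := Nat.mod_lt A hp.pos
    have h4 := Nat.mod_lt B hp.pos
    rw [h] at h1
    generalize p * (B / p) = D at h1 h2
    omega
  set g : ZMod p → (Fin d → ℕ) := fun m j => (m * z j).val * M / p with hg
  set t : Finset (Fin d → ℕ) := Fintype.piFinset (fun _ => Finset.range M) with ht
  have hmaps : ∀ m ∈ (Finset.univ : Finset (ZMod p)), g m ∈ t := by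
    intro m _
    rw [ht, Fintype.mem_piFinset]
    intro j
    rw [Finset.mem_range, hg]
    refine Nat.div_lt_of_lt_mul ?_
    exact Nat.mul_lt_mul_of_lt_of_le (ZMod.val_lt _) le_rfl hMpos
  have htcard : t.card = M ^ d := by
    rw [ht, Fintype.card_piFinset]
    simp
  have hcardu : (Finset.univ : Finset (ZMod p)).card = p := by
    rw [Finset.card_univ, ZMod.card]
  have hMd : 0 < M ^ d := Nat.pow_pos hMpos
  set n := (p - 1) / M ^ d with hn
  have hlt : t.card * n < (Finset.univ : Finset (ZMod p)).card := by
    rw [htcard, hcardu, hn]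
    have h1 := Nat.div_mul_le_self (p - 1) (M ^ d)
    have := hp.pos
    calc M ^ d * ((p - 1) / M ^ d) = (p - 1) / M ^ d * M ^ d := by ring
    _ ≤ p - 1 := h1
    _ < p := by omega
  obtain ⟨b, _, hb⟩ := Finset.exists_lt_card_fiber_of_mul_lt_card_of_maps_to hmaps hlt
  set F := Finset.univ.filter (fun m : ZMod p => g m = b) with hF
  have hFpos : 0 < F.card := lt_of_le_of_lt (Nat.zero_le n) hb
  obtain ⟨m₀, hm₀⟩ := Finset.card_pos.mp hFpos
  refine ⟨F.image (fun m => m - m₀), ?_, ?_⟩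
  · have hinj : Function.Injective (fun m : ZMod p => m - m₀) := fun a b h => by
      simpa using congrArg (fun w => w + m₀) h
    rw [Finset.card_image_of_injective _ hinj]
    have h2 : p ≤ M ^ d * F.card := by
      have hple : p ≤ M ^ d * (n + 1) := by
        have hmod := Nat.div_add_mod (p - 1) (M ^ d)
        have hmlt : (p - 1) % (M ^ d) < M ^ d := Nat.mod_lt _ hMd
        rw [Nat.mul_add_one]
        rw [← hn] at hmod
        have := hp.pos
        generalize M ^ d * n = s at hmod ⊢
        omega
      calc p ≤ M ^ d * (n + 1) := hple
      _ ≤ M ^ d * F.card := Nat.mul_le_mul_left _ hb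
    exact_mod_cast h2
  · intro m hm j
    rw [Finset.mem_image] at hm
    obtain ⟨m₁, hm₁, rfl⟩ := hm
    rw [hF, Finset.mem_filter] at hm₁ hm₀
    have hbj : (m₁ * z j).val * M / p = (m₀ * z j).val * M / p := by
      rw [show (m₁ * z j).val * M / p = g m₁ j from rfl,
          show (m₀ * z j).val * M / p = g m₀ j from rfl, hm₁.2, hm₀.2]
    set a1 := (m₁ * z j).val with ha1
    set a0 := (m₀ * z j).val with ha0
    refine ⟨(a1 : ℤ) - a0, ?_, ?_⟩
    · push_cast [ha1, ha0, ZMod.natCast_val, ZMod.cast_id]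
      ring
    · have hkey := key (a1 * M) (a0 * M) hbj
      have habs : (((a1 : ℤ) - a0).natAbs) * M = (((a1 * M : ℕ) : ℤ) - ((a0 * M : ℕ) : ℤ)).natAbs := by
        rw [show (((a1 * M : ℕ) : ℤ) - ((a0 * M : ℕ) : ℤ)) = ((a1 : ℤ) - a0) * (M : ℤ) by push_cast; ring,
          Int.natAbs_mul]
        simp
      rw [habs]
      exact hkey

lemma qw_sum_lower {α : Type*} [Fintype α] [DecidableEq α] (f : α → ℝ) (a : α → ℂ)
    (B : Finset α) (s : ℝ) (hs : 0 ≤ s)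
    (hre : ∀ k₀ ∈ B, ∀ k : α, f k = f k₀ → s ≤ (a k).re) :
    (B.card : ℝ) * s ^ 2 ≤
      ∑ ev ∈ Finset.univ.image f,
        ‖∑ k ∈ Finset.univ.filter (fun k => f k = ev), a k‖ ^ 2 := by
  classical
  have h1 : ∀ ev ∈ B.image f,
      ((B.filter (fun k => f k = ev)).card : ℝ) * s ^ 2 ≤
        ‖∑ k ∈ Finset.univ.filter (fun k => f k = ev), a k‖ ^ 2 := by
    intro ev hev
    obtain ⟨k₀, hk₀B, hk₀⟩ := Finset.mem_image.mp hev
    set cB := (B.filter (fun k => f k = ev)).card with hcB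
    have hre' : ∀ k ∈ Finset.univ.filter (fun k => f k = ev), s ≤ (a k).re := by
      intro k hk
      exact hre k₀ hk₀B k (by rw [(Finset.mem_filter.mp hk).2, hk₀])
    have hresum : (cB : ℝ) * s ≤ (∑ k ∈ Finset.univ.filter (fun k => f k = ev), a k).re := by
      rw [Complex.re_sum]
      calc (cB : ℝ) * s = ∑ _k ∈ B.filter (fun k => f k = ev), s := by
            rw [Finset.sum_const, nsmul_eq_mul, hcB]
      _ ≤ ∑ k ∈ B.filter (fun k => f k = ev), (a k).re := by
            refine Finset.sum_le_sum fun k hk => hre' k ?_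
            rw [Finset.mem_filter] at hk ⊢
            exact ⟨Finset.mem_univ k, hk.2⟩
      _ ≤ ∑ k ∈ Finset.univ.filter (fun k => f k = ev), (a k).re := by
            refine Finset.sum_le_sum_of_subset_of_nonneg
              (Finset.filter_subset_filter _ (Finset.subset_univ B)) ?_
            intro k hk _
            exact le_trans hs (hre' k hk)
    have habs : ((∑ k ∈ Finset.univ.filter (fun k => f k = ev), a k).re : ℝ) ≤
        ‖∑ k ∈ Finset.univ.filter (fun k => f k = ev), a k‖ :=
      Complex.re_le_norm _
    have hcb1 : 1 ≤ cB := by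
      rw [hcB]
      refine Finset.card_pos.mpr ⟨k₀, ?_⟩
      exact Finset.mem_filter.mpr ⟨hk₀B, hk₀⟩
    have hcb1' : (1 : ℝ) ≤ (cB : ℝ) := by exact_mod_cast hcb1
    calc (cB : ℝ) * s ^ 2 ≤ ((cB : ℝ) * s) ^ 2 := by nlinarith [sq_nonneg s]
    _ ≤ ‖∑ k ∈ Finset.univ.filter (fun k => f k = ev), a k‖ ^ 2 := by
        refine pow_le_pow_left₀ (by positivity) ?_ 2
        exact le_trans hresum habs
  calc (B.card : ℝ) * s ^ 2
      = (∑ ev ∈ B.image f, ((B.filter (fun k => f k = ev)).card : ℝ)) * s ^ 2 := by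
        rw [← Nat.cast_sum, ← Finset.card_eq_sum_card_fiberwise
          (fun x hx => Finset.mem_image_of_mem f hx)]
  _ = ∑ ev ∈ B.image f, ((B.filter (fun k => f k = ev)).card : ℝ) * s ^ 2 := by
        rw [Finset.sum_mul]
  _ ≤ ∑ ev ∈ B.image f,
        ‖∑ k ∈ Finset.univ.filter (fun k => f k = ev), a k‖ ^ 2 :=
        Finset.sum_le_sum h1
  _ ≤ ∑ ev ∈ Finset.univ.image f,
        ‖∑ k ∈ Finset.univ.filter (fun k => f k = ev), a k‖ ^ 2 := by
        refine Finset.sum_le_sum_of_subset_of_nonneg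
          (Finset.image_subset_image (Finset.subset_univ B)) ?_
        intro ev _ _
        positivity

/-- Amplification for the torus `ℤ_p^d`: for fixed `d ≥ 1` there is a constant
`c > 0` (depending only on `d`) such that for every prime `p > 4d`, with `N = p^d`,
every entry of the infinite-time Cesaro matrix
`Π(y,x) = Σ_j |Σ_{k∈C_j} ⟨y|φ_k⟩⟨φ_k|x⟩|²` of the quantum walk on `ℤ_p^d` —
where `φ_k = N^{-1/2} Σ_x e^{2πi k·x/p}|x⟩` are the characters and the classes `C_j`
group indices `k` of equal eigenvalue `λ_k = (1/d)Σ_j cos(2πk_j/p)` — is at least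
`c/N`. -/
theorem stmt17 (d : ℕ) (hd : 1 ≤ d) :
    ∃ c : ℝ, 0 < c ∧
      ∀ (p : ℕ) [NeZero p], p.Prime → 4 * d < p →
        ∀ y x : Fin d → ZMod p,
          c / (p : ℝ) ^ d ≤
            ∑ ev ∈ Finset.univ.image
                (fun k : Fin d → ZMod p =>
                  (1 / (d : ℝ)) * ∑ j, Real.cos (2 * Real.pi * ((k j).val : ℝ) / p)),
              ‖(∑ k ∈ Finset.univ.filter
                    (fun k : Fin d → ZMod p =>
                      (1 / (d : ℝ)) * ∑ j, Real.cos (2 * Real.pi * ((k j).val : ℝ) / p) = ev),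
                  ((1 / Real.sqrt ((p : ℝ) ^ d) : ℝ) *
                      Complex.exp (2 * Real.pi * Complex.I *
                        ((∑ j, k j * y j).val : ℝ) / p)) *
                    starRingEnd ℂ
                      ((1 / Real.sqrt ((p : ℝ) ^ d) : ℝ) *
                        Complex.exp (2 * Real.pi * Complex.I *
                          ((∑ j, k j * x j).val : ℝ) / p)))‖ ^ 2 := by
  classical
  have hd0 : 0 < d := hd
  have hKpos : (0 : ℝ) < (((8 * d) ^ d : ℕ) : ℝ) := by
    have : 0 < (8 * d) ^ d := Nat.pow_pos (by omega)
    exact_mod_cast this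
  refine ⟨1 / (2 * (((8 * d) ^ d : ℕ) : ℝ) ^ d), by positivity, ?_⟩
  intro p _ hp hpd y x
  have hp0 : (0 : ℝ) < p := by exact_mod_cast hp.pos
  set N : ℝ := (p : ℝ) ^ d with hN
  have hN0 : 0 < N := by positivity
  set z : Fin d → ZMod p := fun j => y j - x j with hz
  obtain ⟨T, hTcard, hTprop⟩ := qw_bohr d p hp hd0 z
  set B : Finset (Fin d → ZMod p) := Fintype.piFinset (fun _ => T) with hB
  set f : (Fin d → ZMod p) → ℝ :=
    fun k => (1 / (d : ℝ)) * ∑ j, Real.cos (2 * Real.pi * ((k j).val : ℝ) / p) with hf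
  set a : (Fin d → ZMod p) → ℂ := fun k =>
    ((1 / Real.sqrt ((p : ℝ) ^ d) : ℝ) : ℂ) *
        Complex.exp (2 * Real.pi * Complex.I * ((∑ j, k j * y j).val : ℝ) / p) *
      starRingEnd ℂ
        (((1 / Real.sqrt ((p : ℝ) ^ d) : ℝ) : ℂ) *
          Complex.exp (2 * Real.pi * Complex.I * ((∑ j, k j * x j).val : ℝ) / p)) with ha
  set s : ℝ := Real.sqrt 2 / 2 / N with hs
  have hs0 : 0 ≤ s := by positivity
  -- the key real-part estimate
  have hre : ∀ k₀ ∈ B, ∀ k : Fin d → ZMod p, f k = f k₀ → s ≤ (a k).re := by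
    intro k₀ hk₀B k hfk
    -- cancel the 1/d factor
    have hcos : ∑ j, Real.cos (2 * Real.pi * (((k₀ j).val : ℝ)) / p)
        = ∑ j, Real.cos (2 * Real.pi * (((k j).val : ℝ)) / p) := by
      have hd' : (1 / (d : ℝ)) ≠ 0 := by
        have : (0:ℝ) < d := by exact_mod_cast hd0
        positivity
      have := hfk
      rw [hf] at this
      exact (mul_left_cancel₀ hd' this).symm
    have hcl := qw_class_lemma d p hp k₀ k hcos
    have hk₀T : ∀ m : Fin d, k₀ m ∈ T := Fintype.mem_piFinset.mp hk₀B
    -- choose integer representatives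
    have hWi : ∀ i : Fin d, ∃ W : ℤ, ((W : ZMod p) = k i * z i ∧ W.natAbs * (8 * d) < p) := by
      intro i
      obtain ⟨m, hm⟩ := hcl i
      obtain ⟨W, hW1, hW2⟩ := hTprop (k₀ m) (hk₀T m) i
      rcases hm with h' | h'
      · exact ⟨W, by rw [h', ← hW1], hW2⟩
      · refine ⟨-W, ?_, by simpa using hW2⟩
        rw [h', Int.cast_neg, hW1, neg_mul]
    choose W hW1 hW2 using hWi
    set Wt : ℤ := ∑ i, W i with hWt
    have hWt1 : ((Wt : ℤ) : ZMod p) = ∑ i, k i * z i := by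
      rw [hWt]
      push_cast
      exact Finset.sum_congr rfl fun i _ => hW1 i
    have hWt8 : (Wt.natAbs : ℝ) * 8 ≤ p := by
      have habs : |Wt| ≤ ∑ i, |W i| := by rw [hWt]; exact Finset.abs_sum_le_sum_abs _ _
      have hterm : ∀ i : Fin d, |W i| * (8 * (d:ℤ)) ≤ (p:ℤ) - 1 := by
        intro i
        have h1 : ((W i).natAbs : ℤ) * (8 * (d:ℤ)) < p := by exact_mod_cast hW2 i
        rw [Int.abs_eq_natAbs]
        omega
      have hsum : (∑ i, |W i|) * (8 * (d:ℤ)) ≤ (d : ℤ) * ((p:ℤ) - 1) := by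
        rw [Finset.sum_mul]
        calc ∑ i, |W i| * (8 * (d:ℤ)) ≤ ∑ _i : Fin d, ((p:ℤ) - 1) :=
              Finset.sum_le_sum fun i _ => hterm i
        _ = (d:ℤ) * ((p:ℤ) - 1) := by
              rw [Finset.sum_const, Finset.card_univ, Fintype.card_fin, nsmul_eq_mul]
      have hdpos : (0:ℤ) < (d:ℤ) := by exact_mod_cast hd0
      have h8 : |Wt| * 8 ≤ (p:ℤ) - 1 := by
        refine le_of_mul_le_mul_right ?_ hdpos
        calc |Wt| * 8 * (d:ℤ) = |Wt| * (8 * (d:ℤ)) := by ring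
        _ ≤ (∑ i, |W i|) * (8 * (d:ℤ)) := by
              refine mul_le_mul_of_nonneg_right habs ?_
              positivity
        _ ≤ (d:ℤ) * ((p:ℤ) - 1) := hsum
        _ = ((p:ℤ) - 1) * (d:ℤ) := by ring
      have hfin : (Wt.natAbs : ℤ) * 8 ≤ (p:ℤ) := by rw [← Int.abs_eq_natAbs]; omega
      exact_mod_cast hfin
    -- rewrite a k
    have hrr : ((1 / Real.sqrt ((p : ℝ) ^ d) : ℝ)) * ((1 / Real.sqrt ((p : ℝ) ^ d) : ℝ))
        = 1 / N := by
      rw [div_mul_div_comm, one_mul, Real.mul_self_sqrt (le_of_lt hN0), hN]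
    have hak : a k = ((1 / N : ℝ) : ℂ) *
        Complex.exp (2 * Real.pi * Complex.I * (Wt : ℂ) / p) := by
      rw [ha]
      simp only [map_mul, Complex.conj_ofReal, ← Complex.exp_conj]
      have hconj : (starRingEnd ℂ) (2 * Real.pi * Complex.I * ((∑ j, k j * x j).val : ℝ) / p)
          = -(2 * Real.pi * Complex.I * ((∑ j, k j * x j).val : ℝ) / p) := by
        simp only [map_div₀, map_mul, Complex.conj_I, Complex.conj_ofReal, map_ofNat,
          Complex.conj_natCast]
        ring
      rw [hconj]
      set v1 : ℕ := (∑ j, k j * y j).val with hv1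
      set v2 : ℕ := (∑ j, k j * x j).val with hv2
      have hrep : (((v1 : ℤ) - v2 : ℤ) : ZMod p) = ∑ i, k i * z i := by
        rw [hv1, hv2]
        push_cast [ZMod.natCast_val, ZMod.cast_id]
        rw [← Finset.sum_sub_distrib]
        refine Finset.sum_congr rfl fun j _ => ?_
        show k j * y j - k j * x j = k j * z j
        rw [hz]
        exact (mul_sub _ _ _).symm
      have hqw1 := qwChi_int p (∑ i, k i * z i) ((v1 : ℤ) - v2) hrep
      have hqw2 := qwChi_int p (∑ i, k i * z i) Wt hWt1
      have hexp : Complex.exp (2 * Real.pi * Complex.I * (v1 : ℝ) / p) *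
          Complex.exp (-(2 * Real.pi * Complex.I * (v2 : ℝ) / p))
          = Complex.exp (2 * Real.pi * Complex.I * (Wt : ℂ) / p) := by
        rw [← Complex.exp_add, ← hqw2, hqw1]
        congr 1
        push_cast
        ring
      calc ((1 / Real.sqrt ((p : ℝ) ^ d) : ℝ) : ℂ) *
            Complex.exp (2 * Real.pi * Complex.I * (v1 : ℝ) / p) *
            (((1 / Real.sqrt ((p : ℝ) ^ d) : ℝ) : ℂ) *
              Complex.exp (-(2 * Real.pi * Complex.I * (v2 : ℝ) / p)))
          = (((1 / Real.sqrt ((p : ℝ) ^ d) : ℝ) * (1 / Real.sqrt ((p : ℝ) ^ d) : ℝ) : ℝ) : ℂ) *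
            (Complex.exp (2 * Real.pi * Complex.I * (v1 : ℝ) / p) *
              Complex.exp (-(2 * Real.pi * Complex.I * (v2 : ℝ) / p))) := by
            push_cast
            ring
      _ = ((1 / N : ℝ) : ℂ) * Complex.exp (2 * Real.pi * Complex.I * (Wt : ℂ) / p) := by
            rw [hrr, hexp]
    -- real part estimate
    have harg : 2 * Real.pi * Complex.I * (Wt : ℂ) / p
        = ((2 * Real.pi * (Wt : ℝ) / p : ℝ) : ℂ) * Complex.I := by
      push_cast
      ring
    have hre' : (a k).re = (1 / N) * Real.cos (2 * Real.pi * (Wt : ℝ) / p) := by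
      rw [hak, harg, Complex.re_ofReal_mul, Complex.exp_ofReal_mul_I_re]
    rw [hre']
    set θ : ℝ := 2 * Real.pi * (Wt : ℝ) / p with hθ
    have hWtabs : |(Wt : ℝ)| * 8 ≤ p := by
      rw [show |(Wt : ℝ)| = (Wt.natAbs : ℝ) by simp [Nat.cast_natAbs]]
      exact hWt8
    have hθabs : |θ| ≤ Real.pi / 4 := by
      rw [hθ, abs_div, abs_mul, abs_mul]
      rw [abs_of_pos hp0, abs_of_pos Real.pi_pos, abs_of_pos (by norm_num : (0:ℝ) < 2)]
      rw [div_le_iff₀ hp0]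
      nlinarith [Real.pi_pos, hWtabs, abs_nonneg ((Wt : ℝ))]
    have hcosθ : Real.sqrt 2 / 2 ≤ Real.cos θ := by
      rw [← Real.cos_abs θ, ← Real.cos_pi_div_four]
      refine Real.cos_le_cos_of_nonneg_of_le_pi (abs_nonneg θ) ?_ hθabs
      linarith [Real.pi_pos]
    rw [hs]
    rw [div_div]
    rw [show (1 / N) * Real.cos θ = Real.cos θ / N by ring,
        show Real.sqrt 2 / (2 * N) = (Real.sqrt 2 / 2) / N by ring]
    exact div_le_div_of_nonneg_right hcosθ hN0.le
  have hmain := qw_sum_lower f a B s hs0 hre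
  refine le_trans ?_ hmain
  have hBcard : ((B.card : ℕ) : ℝ) = ((T.card : ℕ) : ℝ) ^ d := by
    rw [hB, Fintype.card_piFinset]
    push_cast
    rw [Finset.prod_const, Finset.card_univ, Fintype.card_fin]
  have h2 : Real.sqrt 2 ^ 2 = 2 := Real.sq_sqrt (by norm_num)
  have hs2 : s ^ 2 = 1 / (2 * N ^ 2) := by
    rw [hs, div_pow, div_pow, h2]
    ring
  have key : (p : ℝ) ^ d ≤ (((8 * d) ^ d : ℕ) : ℝ) ^ d * ((T.card : ℕ) : ℝ) ^ d := by
    rw [← mul_pow]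
    exact pow_le_pow_left₀ hp0.le hTcard d
  rw [hBcard, hs2, hN]
  rw [show (1 / (2 * (((8 * d) ^ d : ℕ) : ℝ) ^ d)) / (p : ℝ) ^ d
      = 1 / (2 * (((8 * d) ^ d : ℕ) : ℝ) ^ d * (p : ℝ) ^ d) by ring]
  rw [show ((T.card : ℕ) : ℝ) ^ d * (1 / (2 * ((p : ℝ) ^ d) ^ 2))
      = ((T.card : ℕ) : ℝ) ^ d / (2 * ((p : ℝ) ^ d) ^ 2) by ring]
  rw [div_le_div_iff₀ (by positivity) (by positivity)]
  nlinarith [mul_le_mul_of_nonneg_left key (show (0:ℝ) ≤ 2 * (p : ℝ) ^ d by positivity),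
    pow_pos hp0 d]
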